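/- For each integer n ≥ 1, define ℐ_n(z) = Σ_{l=0}^∞ z^{2l} ((2l)!)^{n−1} / ((l!)^{2n} 2^{2ln}). Then with λ(n) = 1 for n ∈ {1,2} and λ(n) = (n−1)^{n−1}/(n/2)^n for n > 2, the function z ↦ exp(λ z²/2^{n+1}) / ℐ_n(z) is nondecreasing on [0,∞); consequently G̃(z) := λ z²/2^{n+1} − log ℐ_n(z) is nonnegative and nondecreasing on [0,∞) with G̃(0)=0. -/

import Mathlib

open Real

/-- `ℐ_n(z) = Σ_{l=0}^∞ z^{2l} ((2l)!)^{n−1} / ((l!)^{2n} 2^{2ln})`. -/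
noncomputable def scriptI (n : ℕ) (z : ℝ) : ℝ :=
  ∑' l : ℕ, z ^ (2 * l) * ((2 * l).factorial : ℝ) ^ (n - 1) /
    (((l.factorial : ℝ)) ^ (2 * n) * 2 ^ (2 * l * n))

/-- `λ(n) = 1` for `n ∈ {1,2}` and `λ(n) = (n−1)^{n−1}/(n/2)^n` for `n > 2`. -/
noncomputable def lamConst (n : ℕ) : ℝ :=
  if n ≤ 2 then 1 else ((n : ℝ) - 1) ^ (n - 1) / ((n : ℝ) / 2) ^ n

namespace ExpQuotAux

/-- normalized central binomial term -/
noncomputable def Cb (l : ℕ) : ℝ := ((2 * l).factorial : ℝ) / ((l.factorial : ℝ) ^ 2 * 4 ^ l)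

/-- coefficient of `(z²)^l` in `scriptI (m+1)` -/
noncomputable def aC (m l : ℕ) : ℝ := Cb l ^ m / ((l.factorial : ℝ) ^ 2 * 4 ^ l)

/-- coefficient of `(z²)^l` in the exponential factor -/
noncomputable def bC (m l : ℕ) : ℝ := (lamConst (m + 1) / 2 ^ (m + 2)) ^ l / (l.factorial : ℝ)

lemma fact_pos (l : ℕ) : (0 : ℝ) < (l.factorial : ℝ) := by
  exact_mod_cast l.factorial_pos

lemma Cb_pos (l : ℕ) : 0 < Cb l := by
  have h1 := fact_pos (2 * l)
  have h2 := fact_pos l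
  unfold Cb
  positivity

lemma Cb_le_one (l : ℕ) : Cb l ≤ 1 := by
  have h0 : (2 * l).choose l * l.factorial * l.factorial = (2 * l).factorial := by
    have := Nat.choose_mul_factorial_mul_factorial (show l ≤ 2 * l by omega)
    rwa [show 2 * l - l = l by omega] at this
  have h1 : (2 * l).choose l ≤ 4 ^ l :=
    le_trans (Nat.choose_le_choose l (by omega)) (Nat.choose_middle_le_pow l)
  have h2 : ((2 * l).factorial : ℝ) ≤ (l.factorial : ℝ) ^ 2 * 4 ^ l := by
    have : (2 * l).factorial ≤ 4 ^ l * (l.factorial * l.factorial) := by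
      calc (2 * l).factorial = (2 * l).choose l * l.factorial * l.factorial := h0.symm
        _ ≤ 4 ^ l * l.factorial * l.factorial :=
            Nat.mul_le_mul_right _ (Nat.mul_le_mul_right _ h1)
        _ = 4 ^ l * (l.factorial * l.factorial) := by ring
    calc ((2 * l).factorial : ℝ) ≤ ((4 ^ l * (l.factorial * l.factorial) : ℕ) : ℝ) := by
          exact_mod_cast this
      _ = (l.factorial : ℝ) ^ 2 * 4 ^ l := by push_cast; ring
  have h3 : (0 : ℝ) < (l.factorial : ℝ) ^ 2 * 4 ^ l := by
    have := fact_pos l; positivity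
  rw [Cb, div_le_one h3]
  exact h2

lemma aC_pos (m l : ℕ) : 0 < aC m l := by
  have h1 := Cb_pos l
  have h2 := fact_pos l
  unfold aC
  positivity

lemma lam_pos (m : ℕ) : 0 < lamConst (m + 1) := by
  unfold lamConst
  split
  · norm_num
  · next h =>
    have h3 : (3 : ℕ) ≤ m + 1 := by omega
    have h1 : (0 : ℝ) < ((m + 1 : ℕ) : ℝ) - 1 := by
      have : (3 : ℝ) ≤ ((m + 1 : ℕ) : ℝ) := by exact_mod_cast h3
      linarith
    have h2 : (0 : ℝ) < ((m + 1 : ℕ) : ℝ) / 2 := by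
      have : (3 : ℝ) ≤ ((m + 1 : ℕ) : ℝ) := by exact_mod_cast h3
      linarith
    exact div_pos (pow_pos h1 _) (pow_pos h2 _)

lemma bC_pos (m l : ℕ) : 0 < bC m l := by
  have h1 := lam_pos m
  have h2 := fact_pos l
  have hc : 0 < lamConst (m + 1) / 2 ^ (m + 2) := by positivity
  unfold bC
  positivity

/-- Bernoulli-type inequality: `a^m (m+1)^{m+1} ≤ m^m (a+1)^{m+1}` for `a ≥ 1`. -/
lemma bern_aux (m : ℕ) (a : ℝ) (ha : 1 ≤ a) :
    a ^ m * ((m : ℝ) + 1) ^ (m + 1) ≤ (m : ℝ) ^ m * (a + 1) ^ (m + 1) := by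
  rcases Nat.eq_zero_or_pos m with rfl | hm
  · simp; linarith
  · set N : ℝ := (m : ℝ) + 1 with hN
    have hm1 : (1 : ℝ) ≤ (m : ℝ) := by exact_mod_cast hm
    have hNpos : (0 : ℝ) < N := by simp only [hN]; linarith
    have hapos : (0 : ℝ) < a := by linarith
    set x : ℝ := (N - 1 - a) / (a * N) with hx
    have haN : (0 : ℝ) < a * N := mul_pos hapos hNpos
    have hx2 : -2 ≤ x := by
      rw [hx, neg_le, ← sub_nonneg]
      have : 0 ≤ ((N - 1) + a * (2 * N - 1)) / (a * N) := by
        apply div_nonneg _ haN.le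
        have : (1:ℝ) ≤ 2 * N - 1 := by simp only [hN]; linarith
        nlinarith
      calc (0:ℝ) ≤ ((N - 1) + a * (2 * N - 1)) / (a * N) := this
        _ = -(-2) - -((N - 1 - a) / (a * N)) := by field_simp; ring
        _ = _ := by ring
    have hber := one_add_mul_le_pow hx2 (m + 1)
    have h1x : 1 + x = (a + 1) * (N - 1) / (a * N) := by
      rw [hx]; field_simp; ring
    have hlhs : 1 + ((m : ℕ) + 1 : ℕ) * x = (N - 1) / a := by
      push_cast
      rw [hx]
      have hN' : N ≠ 0 := ne_of_gt hNpos
      have ha' : a ≠ 0 := ne_of_gt hapos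
      field_simp
      ring
    rw [show ((m : ℕ) + 1 : ℕ) * x = (((m:ℕ) + 1 : ℕ) : ℝ) * x by norm_num] at *
    have key : (N - 1) / a ≤ ((a + 1) * (N - 1)) ^ (m + 1) / (a * N) ^ (m + 1) := by
      have := hber
      rw [h1x] at this
      rw [div_pow] at this
      calc (N - 1) / a = 1 + (((m:ℕ) + 1 : ℕ) : ℝ) * x := hlhs.symm
        _ ≤ _ := by exact_mod_cast this
    have hNm : N - 1 = (m : ℝ) := by simp [hN]
    have hmpos : (0 : ℝ) < (m : ℝ) := by linarith
    -- clear denominators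
    have key2 : (N - 1) * (a ^ (m + 1) * N ^ (m + 1)) ≤ (a + 1) ^ (m + 1) * (N - 1) ^ (m + 1) * a := by
      rw [div_le_div_iff₀ hapos (by positivity)] at key
      rw [mul_pow, mul_pow] at key
      linarith [key]
    -- now divide by a * (N-1) > 0
    have hpos : (0 : ℝ) < a * (N - 1) := by rw [hNm]; positivity
    apply le_of_mul_le_mul_right _ hpos
    calc a ^ m * N ^ (m + 1) * (a * (N - 1))
        = (N - 1) * (a ^ (m + 1) * N ^ (m + 1)) := by ring
      _ ≤ (a + 1) ^ (m + 1) * (N - 1) ^ (m + 1) * a := key2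
      _ = (N - 1) ^ m * (a + 1) ^ (m + 1) * (a * (N - 1)) := by ring
      _ = (m : ℝ) ^ m * (a + 1) ^ (m + 1) * (a * (N - 1)) := by rw [hNm]

/-- the core bound `(2l+1)^m ≤ λ(m+1) (l+1)^{m+1}` -/
lemma lam_bound (m l : ℕ) :
    (2 * (l : ℝ) + 1) ^ m ≤ lamConst (m + 1) * ((l : ℝ) + 1) ^ (m + 1) := by
  have hl : (0 : ℝ) ≤ (l : ℝ) := Nat.cast_nonneg l
  by_cases h : m + 1 ≤ 2
  · have hm1 : m ≤ 1 := by omega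
    interval_cases m
    · simp [lamConst]
    · have : lamConst 2 = 1 := by simp [lamConst]
      rw [show (0:ℕ)+1+1 = 2 by rfl] at *
      rw [this]
      rw [one_mul, pow_one]
      nlinarith
  · have hlam : lamConst (m + 1)
        = ((m : ℝ)) ^ m / ((((m : ℝ) + 1)) / 2) ^ (m + 1) := by
      unfold lamConst
      rw [if_neg h]
      push_cast
      norm_num
    rw [hlam]
    have hm2 : 2 ≤ m := by omega
    have hm1 : (1 : ℝ) ≤ (m : ℝ) := by exact_mod_cast (by omega : 1 ≤ m)
    have hNpos : (0 : ℝ) < (((m : ℝ) + 1) / 2) ^ (m + 1) := by positivity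
    rw [div_mul_eq_mul_div, le_div_iff₀ hNpos]
    have ha : (1 : ℝ) ≤ 2 * (l : ℝ) + 1 := by linarith
    have hber := bern_aux m (2 * (l : ℝ) + 1) ha
    calc (2 * (l : ℝ) + 1) ^ m * (((m : ℝ) + 1) / 2) ^ (m + 1)
        = (2 * (l : ℝ) + 1) ^ m * ((m : ℝ) + 1) ^ (m + 1) / 2 ^ (m + 1) := by
          rw [div_pow]; ring
      _ ≤ (m : ℝ) ^ m * ((2 * (l : ℝ) + 1) + 1) ^ (m + 1) / 2 ^ (m + 1) := by
          apply div_le_div_of_nonneg_right _ (by positivity)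
          · exact hber
      _ = (m : ℝ) ^ m * ((l : ℝ) + 1) ^ (m + 1) := by
          rw [show (2 * (l : ℝ) + 1) + 1 = 2 * ((l : ℝ) + 1) by ring, mul_pow]
          field_simp

lemma Cb_succ (l : ℕ) :
    Cb (l + 1) = Cb l * ((2 * (l : ℝ) + 1) * (2 * (l : ℝ) + 2) / (((l : ℝ) + 1) ^ 2 * 4)) := by
  unfold Cb
  have h2 : (2 * (l + 1)) = (2 * l + 1) + 1 := by ring
  rw [h2, Nat.factorial_succ, show 2 * l + 1 = (2 * l) + 1 from rfl, Nat.factorial_succ,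
    Nat.factorial_succ]
  have hf := fact_pos l
  have hf2 := fact_pos (2 * l)
  have hl1 : (0:ℝ) < (l:ℝ) + 1 := by positivity
  push_cast
  field_simp
  ring

lemma aC_succ (m l : ℕ) :
    aC m (l + 1) * ((((l : ℝ) + 1) ^ 2) ^ (m + 1) * 4 ^ (m + 1))
      = aC m l * ((2 * (l : ℝ) + 1) * (2 * (l : ℝ) + 2)) ^ m := by
  unfold aC
  rw [Cb_succ, mul_pow, div_pow, mul_pow (((l : ℝ) + 1) ^ 2) 4 m, Nat.factorial_succ]
  have hf := fact_pos l
  have hl1 : (0:ℝ) < (l:ℝ) + 1 := by positivity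
  have h4 : (0:ℝ) < (4:ℝ) ^ l := by positivity
  push_cast
  field_simp
  ring

lemma bC_succ (m l : ℕ) :
    bC m (l + 1) * ((l : ℝ) + 1) = bC m l * (lamConst (m + 1) / 2 ^ (m + 2)) := by
  unfold bC
  rw [Nat.factorial_succ]
  have hf := fact_pos l
  have hl1 : (0:ℝ) < (l:ℝ) + 1 := by positivity
  push_cast
  rw [pow_succ]
  field_simp

lemma step (m l : ℕ) : bC m l * aC m (l + 1) ≤ bC m (l + 1) * aC m l := by
  have hT : (0 : ℝ) < ((((l : ℝ) + 1) ^ 2) ^ (m + 1) * 4 ^ (m + 1)) * ((l : ℝ) + 1) := by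
    positivity
  apply le_of_mul_le_mul_right _ hT
  have hEa := aC_succ m l
  have hEb := bC_succ m l
  have hb := (bC_pos m l).le
  have ha := (aC_pos m l).le
  calc bC m l * aC m (l + 1) * (((((l : ℝ) + 1) ^ 2) ^ (m + 1) * 4 ^ (m + 1)) * ((l : ℝ) + 1))
      = bC m l * (aC m (l + 1) * ((((l : ℝ) + 1) ^ 2) ^ (m + 1) * 4 ^ (m + 1))) * ((l : ℝ) + 1) := by
        ring
    _ = bC m l * (aC m l * ((2 * (l : ℝ) + 1) * (2 * (l : ℝ) + 2)) ^ m) * ((l : ℝ) + 1) := by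
        rw [hEa]
    _ = (bC m l * aC m l) * (((2 * (l : ℝ) + 1) * (2 * (l : ℝ) + 2)) ^ m * ((l : ℝ) + 1)) := by
        ring
    _ ≤ (bC m l * aC m l) * ((lamConst (m + 1) / 2 ^ (m + 2)) * ((((l : ℝ) + 1) ^ 2) ^ (m + 1) * 4 ^ (m + 1))) := by
        apply mul_le_mul_of_nonneg_left _ (mul_nonneg hb ha)
        -- key numeric inequality
        have key := lam_bound m l
        have hmul := mul_le_mul_of_nonneg_right key
          (show (0:ℝ) ≤ ((l : ℝ) + 1) ^ (m + 1) by positivity)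
        calc ((2 * (l : ℝ) + 1) * (2 * (l : ℝ) + 2)) ^ m * ((l : ℝ) + 1)
            = (2 * (l : ℝ) + 1) ^ m * ((l : ℝ) + 1) ^ (m + 1) * 2 ^ m := by
              rw [show (2 * (l : ℝ) + 2) = 2 * ((l:ℝ) + 1) by ring]
              rw [mul_pow, mul_pow]
              ring
          _ ≤ (lamConst (m + 1) * ((l : ℝ) + 1) ^ (m + 1)) * ((l : ℝ) + 1) ^ (m + 1) * 2 ^ m := by
              apply mul_le_mul_of_nonneg_right hmul (by positivity)
          _ = (lamConst (m + 1) / 2 ^ (m + 2)) * ((((l : ℝ) + 1) ^ 2) ^ (m + 1) * 4 ^ (m + 1)) := by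
              have e1 : (((l:ℝ) + 1) ^ 2) ^ (m + 1) = ((l:ℝ) + 1) ^ (m + 1) * ((l:ℝ) + 1) ^ (m + 1) := by
                rw [← pow_mul, ← pow_add]
                congr 1
                ring
              have e2 : (4:ℝ) ^ (m + 1) = 2 ^ (m + 2) * 2 ^ m := by
                rw [show (4:ℝ) = 2 ^ 2 by norm_num, ← pow_mul, ← pow_add]
                congr 1
                ring
              rw [e1, e2]
              have h2 : ((2:ℝ) ^ (m + 2)) ≠ 0 := by positivity
              field_simp
    _ = bC m l * (lamConst (m + 1) / 2 ^ (m + 2)) * aC m l * ((((l : ℝ) + 1) ^ 2) ^ (m + 1) * 4 ^ (m + 1)) := by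
        ring
    _ = bC m (l + 1) * aC m l * (((((l : ℝ) + 1) ^ 2) ^ (m + 1) * 4 ^ (m + 1)) * ((l : ℝ) + 1)) := by
        rw [← hEb]
        ring

lemma cross (m : ℕ) : ∀ i j : ℕ, i ≤ j → bC m i * aC m j ≤ bC m j * aC m i := by
  have hmono : Monotone (fun i => bC m i / aC m i) := by
    apply monotone_nat_of_le_succ
    intro l
    rw [div_le_div_iff₀ (aC_pos m l) (aC_pos m (l + 1))]
    exact step m l
  intro i j hij
  have := hmono hij
  rwa [div_le_div_iff₀ (aC_pos m i) (aC_pos m j)] at this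

lemma pow_mul_pow_le {x y : ℝ} (hx : 0 ≤ x) (hxy : x ≤ y) {i j : ℕ} (h : i ≤ j) :
    x ^ j * y ^ i ≤ x ^ i * y ^ j := by
  obtain ⟨k, rfl⟩ := Nat.exists_eq_add_of_le h
  have hy : 0 ≤ y := hx.trans hxy
  have hk : x ^ k ≤ y ^ k := pow_le_pow_left₀ hx hxy k
  calc x ^ (i + k) * y ^ i = (x ^ i * y ^ i) * x ^ k := by ring
    _ ≤ (x ^ i * y ^ i) * y ^ k := by
        apply mul_le_mul_of_nonneg_left hk (by positivity)
    _ = x ^ i * y ^ (i + k) := by ring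

set_option maxHeartbeats 1000000 in
lemma tsum_quotient_mono {a b : ℕ → ℝ} (ha : ∀ i, 0 ≤ a i) (hb : ∀ i, 0 ≤ b i)
    (hcross : ∀ i j, i ≤ j → b i * a j ≤ b j * a i)
    {x y : ℝ} (hx : 0 ≤ x) (hxy : x ≤ y)
    (hax : Summable fun i => a i * x ^ i) (hay : Summable fun i => a i * y ^ i)
    (hbx : Summable fun i => b i * x ^ i) (hby : Summable fun i => b i * y ^ i) :
    (∑' i, b i * x ^ i) * (∑' i, a i * y ^ i) ≤ (∑' i, b i * y ^ i) * (∑' i, a i * x ^ i) := by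
  have hy : 0 ≤ y := hx.trans hxy
  have hP : Summable fun p : ℕ × ℕ => (b p.1 * x ^ p.1) * (a p.2 * y ^ p.2) :=
    hbx.mul_of_nonneg hay (fun i => mul_nonneg (hb i) (pow_nonneg hx i))
      (fun i => mul_nonneg (ha i) (pow_nonneg hy i))
  have hQ : Summable fun p : ℕ × ℕ => (b p.1 * y ^ p.1) * (a p.2 * x ^ p.2) :=
    hby.mul_of_nonneg hax (fun i => mul_nonneg (hb i) (pow_nonneg hy i))
      (fun i => mul_nonneg (ha i) (pow_nonneg hx i))
  rw [Summable.tsum_mul_tsum hbx hay hP, Summable.tsum_mul_tsum hby hax hQ]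
  have hPs : Summable fun p : ℕ × ℕ => (b p.2 * x ^ p.2) * (a p.1 * y ^ p.1) :=
    (Equiv.prodComm ℕ ℕ).summable_iff.mpr hP
  have hQs : Summable fun p : ℕ × ℕ => (b p.2 * y ^ p.2) * (a p.1 * x ^ p.1) :=
    (Equiv.prodComm ℕ ℕ).summable_iff.mpr hQ
  have key : ∀ p : ℕ × ℕ,
      (b p.1 * x ^ p.1) * (a p.2 * y ^ p.2) + (b p.2 * x ^ p.2) * (a p.1 * y ^ p.1)
        ≤ (b p.1 * y ^ p.1) * (a p.2 * x ^ p.2) + (b p.2 * y ^ p.2) * (a p.1 * x ^ p.1) := by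
    rintro ⟨i, j⟩
    rcases le_total i j with h | h
    · have h1 := hcross i j h
      have h2 : x ^ j * y ^ i ≤ x ^ i * y ^ j := pow_mul_pow_le hx hxy h
      have h3 : 0 ≤ (b j * a i - b i * a j) * (x ^ i * y ^ j - x ^ j * y ^ i) :=
        mul_nonneg (by linarith) (by linarith)
      simp only
      nlinarith [h3]
    · have h1 := hcross j i h
      have h2 : x ^ i * y ^ j ≤ x ^ j * y ^ i := pow_mul_pow_le hx hxy h
      have h3 : 0 ≤ (b i * a j - b j * a i) * (x ^ j * y ^ i - x ^ i * y ^ j) :=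
        mul_nonneg (by linarith) (by linarith)
      simp only
      nlinarith [h3]
  have hsum := Summable.tsum_le_tsum key (hP.add hPs) (hQ.add hQs)
  rw [Summable.tsum_add hP hPs, Summable.tsum_add hQ hQs] at hsum
  have hswapP : (∑' p : ℕ × ℕ, (b p.2 * x ^ p.2) * (a p.1 * y ^ p.1))
      = ∑' p : ℕ × ℕ, (b p.1 * x ^ p.1) * (a p.2 * y ^ p.2) :=
    Equiv.tsum_eq (Equiv.prodComm ℕ ℕ) (fun p : ℕ × ℕ => (b p.1 * x ^ p.1) * (a p.2 * y ^ p.2))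
  have hswapQ : (∑' p : ℕ × ℕ, (b p.2 * y ^ p.2) * (a p.1 * x ^ p.1))
      = ∑' p : ℕ × ℕ, (b p.1 * y ^ p.1) * (a p.2 * x ^ p.2) :=
    Equiv.tsum_eq (Equiv.prodComm ℕ ℕ) (fun p : ℕ × ℕ => (b p.1 * y ^ p.1) * (a p.2 * x ^ p.2))
  rw [hswapP, hswapQ] at hsum
  linarith

lemma aC_le (m l : ℕ) : aC m l ≤ 1 / (l.factorial : ℝ) := by
  have hf := fact_pos l
  have hf1 : (1:ℝ) ≤ (l.factorial : ℝ) := by exact_mod_cast l.factorial_pos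
  have h4 : (1:ℝ) ≤ 4 ^ l := by
    have h := pow_le_pow_left₀ (by norm_num : (0:ℝ) ≤ 1) (by norm_num : (1:ℝ) ≤ 4) l
    simpa using h
  have h1 : Cb l ^ m ≤ 1 := pow_le_one₀ (Cb_pos l).le (Cb_le_one l)
  calc aC m l = Cb l ^ m * (1 / ((l.factorial : ℝ) ^ 2 * 4 ^ l)) := by
        unfold aC; ring
    _ ≤ 1 * (1 / ((l.factorial : ℝ) ^ 2 * 4 ^ l)) :=
        mul_le_mul_of_nonneg_right h1 (by positivity)
    _ = 1 / ((l.factorial : ℝ) ^ 2 * 4 ^ l) := by ring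
    _ ≤ 1 / (l.factorial : ℝ) := by
        apply one_div_le_one_div_of_le hf
        nlinarith

lemma summable_a (m : ℕ) {t : ℝ} (ht : 0 ≤ t) : Summable fun l => aC m l * t ^ l := by
  apply Summable.of_nonneg_of_le (fun l => mul_nonneg (aC_pos m l).le (pow_nonneg ht l))
    (fun l => ?_) (Real.summable_pow_div_factorial t)
  calc aC m l * t ^ l ≤ (1 / (l.factorial : ℝ)) * t ^ l :=
        mul_le_mul_of_nonneg_right (aC_le m l) (pow_nonneg ht l)
    _ = t ^ l / (l.factorial : ℝ) := by ring

lemma summable_b (m : ℕ) (t : ℝ) : Summable fun l => bC m l * t ^ l := by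
  have : (fun l => bC m l * t ^ l) = fun l => (lamConst (m + 1) / 2 ^ (m + 2) * t) ^ l / (l.factorial : ℝ) := by
    funext l
    rw [mul_pow]
    unfold bC
    ring
  rw [this]
  exact Real.summable_pow_div_factorial _

lemma scriptI_eq (m : ℕ) (z : ℝ) : scriptI (m + 1) z = ∑' l, aC m l * (z ^ 2) ^ l := by
  unfold scriptI
  apply tsum_congr
  intro l
  have hf := fact_pos l
  rw [show m + 1 - 1 = m from rfl]
  unfold aC Cb
  rw [div_pow]
  have e1 : ((l.factorial : ℝ)) ^ (2 * (m + 1)) = ((l.factorial : ℝ) ^ 2) ^ (m + 1) := by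
    rw [← pow_mul]
  have e2 : (2:ℝ) ^ (2 * l * (m + 1)) = ((4:ℝ) ^ l) ^ (m + 1) := by
    rw [show (4:ℝ) = 2^2 by norm_num, ← pow_mul, ← pow_mul]
    ring_nf
  have e3 : (z ^ 2) ^ l = z ^ (2 * l) := by rw [← pow_mul]
  rw [e1, e2, e3]
  have hD : ((l.factorial : ℝ) ^ 2 * 4 ^ l) ≠ 0 := by positivity
  field_simp
  ring

lemma exp_eq (m : ℕ) (z : ℝ) :
    Real.exp (lamConst (m + 1) * z ^ 2 / 2 ^ (m + 1 + 1)) = ∑' l, bC m l * (z ^ 2) ^ l := by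
  have h1 : lamConst (m + 1) * z ^ 2 / 2 ^ (m + 1 + 1)
      = lamConst (m + 1) / 2 ^ (m + 2) * z ^ 2 := by ring
  rw [h1, Real.exp_eq_exp_ℝ, NormedSpace.exp_eq_tsum_div]
  apply tsum_congr
  intro l
  rw [mul_pow]
  unfold bC
  ring

lemma scriptI_ge_one (m : ℕ) (z : ℝ) : 1 ≤ scriptI (m + 1) z := by
  rw [scriptI_eq]
  have h0 : aC m 0 * (z ^ 2) ^ 0 = 1 := by
    unfold aC Cb
    norm_num
  calc (1:ℝ) = aC m 0 * (z ^ 2) ^ 0 := h0.symm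
    _ ≤ ∑' l, aC m l * (z ^ 2) ^ l :=
        Summable.le_tsum (summable_a m (sq_nonneg z)) 0
          (fun l _ => mul_nonneg (aC_pos m l).le (pow_nonneg (sq_nonneg z) l))

lemma scriptI_pos (m : ℕ) (z : ℝ) : 0 < scriptI (m + 1) z :=
  lt_of_lt_of_le one_pos (scriptI_ge_one m z)

lemma scriptI_zero (m : ℕ) : scriptI (m + 1) 0 = 1 := by
  rw [scriptI_eq]
  rw [tsum_eq_single 0 (fun l hl => by
    rw [show ((0:ℝ) ^ 2) = 0 by norm_num, zero_pow hl, mul_zero])]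
  unfold aC Cb
  norm_num

lemma main_mono (m : ℕ) :
    MonotoneOn (fun z => Real.exp (lamConst (m + 1) * z ^ 2 / 2 ^ (m + 1 + 1)) / scriptI (m + 1) z)
      (Set.Ici (0 : ℝ)) := by
  intro x hx y hy hxy
  simp only [Set.mem_Ici] at hx hy
  rw [div_le_div_iff₀ (scriptI_pos m x) (scriptI_pos m y)]
  rw [exp_eq, exp_eq, scriptI_eq, scriptI_eq]
  exact tsum_quotient_mono (fun i => (aC_pos m i).le) (fun i => (bC_pos m i).le)
    (cross m) (sq_nonneg x) (pow_le_pow_left₀ hx hxy 2)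
    (summable_a m (sq_nonneg x)) (summable_a m (sq_nonneg y))
    (summable_b m (x ^ 2)) (summable_b m (y ^ 2))

end ExpQuotAux

open ExpQuotAux in
theorem exp_quotient_scriptI_monotone (n : ℕ) (hn : 1 ≤ n) :
    MonotoneOn (fun z => Real.exp (lamConst n * z ^ 2 / 2 ^ (n + 1)) / scriptI n z)
      (Set.Ici (0 : ℝ)) ∧
    (∀ z ≥ (0 : ℝ), 0 ≤ lamConst n * z ^ 2 / 2 ^ (n + 1) - Real.log (scriptI n z)) ∧
    MonotoneOn (fun z => lamConst n * z ^ 2 / 2 ^ (n + 1) - Real.log (scriptI n z))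
      (Set.Ici (0 : ℝ)) ∧
    lamConst n * (0 : ℝ) ^ 2 / 2 ^ (n + 1) - Real.log (scriptI n 0) = 0 := by
  obtain ⟨m, rfl⟩ : ∃ m, n = m + 1 := ⟨n - 1, (Nat.succ_pred_eq_of_pos hn).symm⟩
  have hmono := main_mono m
  have hpos : ∀ z : ℝ, 0 < Real.exp (lamConst (m + 1) * z ^ 2 / 2 ^ (m + 1 + 1)) / scriptI (m + 1) z :=
    fun z => div_pos (Real.exp_pos _) (scriptI_pos m z)
  have hlog : ∀ z : ℝ,
      lamConst (m + 1) * z ^ 2 / 2 ^ (m + 1 + 1) - Real.log (scriptI (m + 1) z)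
        = Real.log (Real.exp (lamConst (m + 1) * z ^ 2 / 2 ^ (m + 1 + 1)) / scriptI (m + 1) z) := by
    intro z
    rw [Real.log_div (Real.exp_ne_zero _) (ne_of_gt (scriptI_pos m z)), Real.log_exp]
  have hzero : lamConst (m + 1) * (0:ℝ) ^ 2 / 2 ^ (m + 1 + 1) - Real.log (scriptI (m + 1) 0) = 0 := by
    rw [scriptI_zero m, Real.log_one]
    ring
  refine ⟨hmono, ?_, ?_, hzero⟩
  · intro z hz
    have h1 := hmono (Set.mem_Ici.mpr le_rfl) (Set.mem_Ici.mpr hz) hz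
    have h0 : Real.exp (lamConst (m + 1) * (0:ℝ) ^ 2 / 2 ^ (m + 1 + 1)) / scriptI (m + 1) 0 = 1 := by
      rw [scriptI_zero m]
      norm_num
    rw [hlog z]
    calc (0:ℝ) = Real.log 1 := Real.log_one.symm
      _ ≤ _ := by
          apply Real.log_le_log (by norm_num)
          calc (1:ℝ) = Real.exp (lamConst (m + 1) * (0:ℝ) ^ 2 / 2 ^ (m + 1 + 1)) / scriptI (m + 1) 0 := h0.symm
            _ ≤ _ := h1
  · intro x hx y hy hxy
    simp only
    rw [hlog x, hlog y]
    exact Real.log_le_log (hpos x) (hmono hx hy hxy)
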